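/- Let N ≥ 1 be a natural number, k an integer, Z a complex number, Q a nonzero complex number, and τ : ℤ × ℤ → ℂ a nowhere-vanishing function satisfying the non-autonomous Hirota bilinear equation τ_{n,m+1}·τ_{n,m−1} = τ_{n,m}² + Z·Q^{kn−Nm}·τ_{n+1,m}·τ_{n−1,m} for all (n,m) ∈ ℤ². Define x_{n,m} := Z·Q^{kn−Nm+N}·τ_{n−1,m−1}·τ_{n+1,m−1}·τ_{n,m−1}^{−2}. Then for all (n,m) ∈ ℤ² one has 1 + x_{n,m} = τ_{n,m}·τ_{n,m−2}·τ_{n,m−1}^{−2}; in particular 1 + x_{n,m} ≠ 0 for all (n,m). -/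

import Mathlib

/-- For a nowhere-vanishing solution of the non-autonomous Hirota bilinear equation, the
variables `x_{n,m} = Z·Q^(kn-Nm+N)·τ_{n-1,m-1}·τ_{n+1,m-1}·τ_{n,m-1}^{-2}` satisfy
`1 + x_{n,m} = τ_{n,m}·τ_{n,m-2}·τ_{n,m-1}^{-2}`; in particular `1 + x_{n,m} ≠ 0`. -/
theorem hirota_one_plus_x (N : ℕ) (hN : 1 ≤ N) (k : ℤ) (Z Q : ℂ) (hQ : Q ≠ 0)
    (τ : ℤ → ℤ → ℂ) (hτ : ∀ n m : ℤ, τ n m ≠ 0)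
    (hHirota : ∀ n m : ℤ, τ n (m + 1) * τ n (m - 1) =
      (τ n m) ^ 2 + Z * Q ^ (k * n - (N : ℤ) * m) * τ (n + 1) m * τ (n - 1) m)
    (x : ℤ → ℤ → ℂ)
    (hx : ∀ n m : ℤ, x n m = Z * Q ^ (k * n - (N : ℤ) * m + (N : ℤ)) *
      τ (n - 1) (m - 1) * τ (n + 1) (m - 1) * ((τ n (m - 1)) ^ 2)⁻¹) :
    ∀ n m : ℤ, 1 + x n m = τ n m * τ n (m - 2) * ((τ n (m - 1)) ^ 2)⁻¹ ∧ 1 + x n m ≠ 0 := by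
  intro n m
  have h := hHirota n (m - 1)
  have e1 : m - 1 + 1 = m := by ring
  have e2 : m - 1 - 1 = m - 2 := by ring
  have e3 : k * n - (N : ℤ) * (m - 1) = k * n - (N : ℤ) * m + (N : ℤ) := by ring
  rw [e1, e2, e3] at h
  have hτ2 : (τ n (m - 1)) ^ 2 ≠ 0 := pow_ne_zero _ (hτ n (m - 1))
  have key : 1 + x n m = τ n m * τ n (m - 2) * ((τ n (m - 1)) ^ 2)⁻¹ := by
    rw [hx]
    field_simp
    rw [h]; field_simp [hτ n (m - 1)]
  refine ⟨key, ?_⟩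
  rw [key]
  exact mul_ne_zero (mul_ne_zero (hτ n m) (hτ n (m - 2))) (inv_ne_zero hτ2)
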